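/- arXiv:1807.05130 — 2 statements merged into one kernel-verified Lean document; each statement's English description precedes it below -/
import Mathlib

section
/- Let (S, +, ·, ≤) be a preordered commutative semiring containing ℕ such that ≤ restricted to ℕ is the usual order and for all nonzero a, b ∈ S there exists r ∈ ℕ with a ≤ r·b. Define the asymptotic preorder a ≲ b iff there exists an integer sequence x_N ∈ o(N) with a^N ≤ 2^{x_N} b^N for all N. Then ≲ is reflexive, transitive, and respects addition and multiplication (a ≲ b and c ≲ d imply a + c ≲ b + d and a·c ≲ b·d). -/
open Filter

/-- The asymptotic preorder associated with a preorder `le` on a commutative semiring. -/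
def AsympLe {S : Type*} [CommSemiring S] (le : S → S → Prop) (a b : S) : Prop :=
  ∃ x : ℕ → ℕ, ((fun N => (x N : ℝ)) =o[atTop] fun N => (N : ℝ)) ∧
    ∀ N : ℕ, le (a ^ N) ((2 : S) ^ (x N) * b ^ N)

/-- The running maximum of a sublinear sequence is sublinear. -/
private lemma sup_littleO (x : ℕ → ℕ)
    (h : (fun N => (x N : ℝ)) =o[atTop] fun N => (N : ℝ)) :
    (fun N => (((Finset.range (N + 1)).sup x : ℕ) : ℝ)) =o[atTop] fun N => (N : ℝ) := by
  rw [Asymptotics.isLittleO_iff] at h ⊢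
  intro c hc
  have h2 := h (half_pos hc)
  rw [eventually_atTop] at h2
  obtain ⟨K, hK⟩ := h2
  set C : ℕ := (Finset.range K).sup x with hC
  have htend : Tendsto (fun N : ℕ => c / 2 * (N : ℝ)) atTop atTop :=
    (tendsto_natCast_atTop_atTop (R := ℝ)).const_mul_atTop (half_pos hc)
  filter_upwards [htend.eventually_ge_atTop (C : ℝ)] with N hN
  obtain ⟨k, hk, hke⟩ := Finset.exists_mem_eq_sup (Finset.range (N + 1)) (by simp) x
  rw [hke]
  have hkN : k ≤ N := by simpa [Nat.lt_succ_iff] using hk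
  have hbase : (x k : ℝ) ≤ c / 2 * N := by
    rcases lt_or_ge k K with hkK | hkK
    · calc (x k : ℝ) ≤ (C : ℝ) := by
            exact_mod_cast Finset.le_sup (Finset.mem_range.2 hkK)
        _ ≤ c / 2 * N := hN
    · have := hK k hkK
      rw [Real.norm_natCast, Real.norm_natCast] at this
      calc (x k : ℝ) ≤ c / 2 * k := this
        _ ≤ c / 2 * N := by
            have : (k : ℝ) ≤ N := by exact_mod_cast hkN
            nlinarith [half_pos hc]
  rw [Real.norm_natCast, Real.norm_natCast]
  nlinarith [Nat.cast_nonneg (α := ℝ) N, half_pos hc]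

theorem stmt8 {S : Type*} [CommSemiring S] (le : S → S → Prop)
    (hrefl : ∀ a, le a a)
    (htrans : ∀ a b c, le a b → le b c → le a c)
    (hadd : ∀ a b c d, le a b → le c d → le (a + c) (b + d))
    (hmul : ∀ a b c d, le a b → le c d → le (a * c) (b * d))
    (hnat : ∀ m n : ℕ, le (m : S) (n : S) ↔ m ≤ n)
    (hbound : ∀ a b : S, a ≠ 0 → b ≠ 0 → ∃ r : ℕ, le a ((r : S) * b)) :
    (∀ a : S, AsympLe le a a) ∧
    (∀ a b c : S, AsympLe le a b → AsympLe le b c → AsympLe le a c) ∧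
    (∀ a b c d : S, AsympLe le a b → AsympLe le c d →
      AsympLe le (a + c) (b + d) ∧ AsympLe le (a * c) (b * d)) := by
  have hpow2 : ∀ m n : ℕ, m ≤ n → le ((2 : S) ^ m) ((2 : S) ^ n) := by
    intro m n hmn
    have e : ∀ k : ℕ, (2 : S) ^ k = ((2 ^ k : ℕ) : S) := by intro k; push_cast; ring
    rw [e m, e n]
    exact (hnat _ _).2 (Nat.pow_le_pow_right (by norm_num) hmn)
  have hsum : ∀ (s : Finset ℕ) (f g : ℕ → S), (∀ k ∈ s, le (f k) (g k)) →
      le (∑ k ∈ s, f k) (∑ k ∈ s, g k) := by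
    intro s
    induction s using Finset.induction with
    | empty => intro f g _; simpa using hrefl 0
    | insert _ _ h ih =>
      intro f g hfg
      rw [Finset.sum_insert h, Finset.sum_insert h]
      exact hadd _ _ _ _ (hfg _ (Finset.mem_insert_self _ _))
        (ih f g fun k hk => hfg k (Finset.mem_insert_of_mem hk))
  refine ⟨?_, ?_, ?_⟩
  · intro a
    refine ⟨fun _ => 0, ?_, fun N => by simpa using hrefl (a ^ N)⟩
    simpa using Asymptotics.isLittleO_zero (fun N : ℕ => (N : ℝ)) atTop
  · rintro a b c ⟨x, hx, hxle⟩ ⟨y, hy, hyle⟩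
    refine ⟨fun N => x N + y N, by simpa using hx.add hy, fun N => ?_⟩
    have h2 := hmul _ _ _ _ (hrefl ((2 : S) ^ (x N))) (hyle N)
    have h3 := htrans _ _ _ (hxle N) h2
    rw [pow_add, mul_assoc]
    exact h3
  · rintro a b c d ⟨x, hx, hxle⟩ ⟨y, hy, hyle⟩
    set x' : ℕ → ℕ := fun N => (Finset.range (N + 1)).sup x with hx'def
    set y' : ℕ → ℕ := fun N => (Finset.range (N + 1)).sup y with hy'def
    have hx'o := sup_littleO x hx
    have hy'o := sup_littleO y hy
    have hx'mono : ∀ m n : ℕ, m ≤ n → x' m ≤ x' n := fun m n hmn =>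
      Finset.sup_mono (Finset.range_subset_range.2 (by omega))
    have hy'mono : ∀ m n : ℕ, m ≤ n → y' m ≤ y' n := fun m n hmn =>
      Finset.sup_mono (Finset.range_subset_range.2 (by omega))
    have hxle' : ∀ N, le (a ^ N) ((2 : S) ^ (x' N) * b ^ N) := by
      intro N
      refine htrans _ _ _ (hxle N) (hmul _ _ _ _ (hpow2 _ _ ?_) (hrefl _))
      exact Finset.le_sup (Finset.self_mem_range_succ N)
    have hyle' : ∀ N, le (c ^ N) ((2 : S) ^ (y' N) * d ^ N) := by
      intro N
      refine htrans _ _ _ (hyle N) (hmul _ _ _ _ (hpow2 _ _ ?_) (hrefl _))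
      exact Finset.le_sup (Finset.self_mem_range_succ N)
    have hxyo : (fun N => ((x' N + y' N : ℕ) : ℝ)) =o[atTop] fun N : ℕ => (N : ℝ) := by
      simpa using hx'o.add hy'o
    constructor
    · refine ⟨fun N => x' N + y' N, hxyo, fun N => ?_⟩
      have hterm : ∀ k ∈ Finset.range (N + 1),
          le (a ^ k * c ^ (N - k) * (N.choose k : S))
             ((2 : S) ^ (x' N + y' N) * (b ^ k * d ^ (N - k) * (N.choose k : S))) := by
        intro k hk
        have hkN : k ≤ N := by simpa [Nat.lt_succ_iff] using hk
        have h1 := hmul _ _ _ _ (hmul _ _ _ _ (hxle' k) (hyle' (N - k)))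
          (hrefl ((N.choose k : S)))
        have h2 : le ((2 : S) ^ (x' k) * b ^ k * ((2 : S) ^ (y' (N - k)) * d ^ (N - k)) *
            (N.choose k : S))
            ((2 : S) ^ (x' N + y' N) * (b ^ k * d ^ (N - k) * (N.choose k : S))) := by
          have e : (2 : S) ^ (x' k) * b ^ k * ((2 : S) ^ (y' (N - k)) * d ^ (N - k)) *
              (N.choose k : S)
              = (2 : S) ^ (x' k + y' (N - k)) * (b ^ k * d ^ (N - k) * (N.choose k : S)) := by
            rw [pow_add]; ring
          rw [e]
          exact hmul _ _ _ _ (hpow2 _ _ (Nat.add_le_add (hx'mono _ _ hkN)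
            (hy'mono _ _ (Nat.sub_le _ _)))) (hrefl _)
        exact htrans _ _ _ h1 h2
      have hbig := hsum _ _ _ hterm
      rw [← add_pow, ← Finset.mul_sum, ← add_pow] at hbig
      exact hbig
    · refine ⟨fun N => x' N + y' N, hxyo, fun N => ?_⟩
      have key := hmul _ _ _ _ (hxle' N) (hyle' N)
      have e : (2 : S) ^ (x' N) * b ^ N * ((2 : S) ^ (y' N) * d ^ N)
          = (2 : S) ^ (x' N + y' N) * (b * d) ^ N := by
        rw [pow_add, mul_pow]; ring
      rw [mul_pow, ← e]
      exact key
end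

section
/- Let α ∈ (0,1] and let K₁, …, K_r be d×d complex matrices with Σ_i K_i*K_i ≤ I. Then for every complex matrix X, (Tr((X*X)^α))^{1/α} ≥ Σ_{i=1}^r (Tr((X*K_i*K_iX)^α))^{1/α}. -/
open Matrix ComplexOrder

/-- Trace of the α-th power (via functional calculus / eigenvalues) of a Hermitian matrix. -/
noncomputable def traceRpow {d : ℕ} (A : Matrix (Fin d) (Fin d) ℂ)
    (hA : A.IsHermitian) (α : ℝ) : ℝ :=
  ∑ i, (hA.eigenvalues i) ^ α

/-- Tangent-line inequality for `x ↦ x^α`, `0 < α ≤ 1`. -/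
private lemma tangent_line {α : ℝ} (hα0 : 0 < α) (hα1 : α ≤ 1) {a b : ℝ}
    (ha : 0 ≤ a) (hb : 0 < b) :
    a ^ α ≤ α * (b ^ (α - 1) * a) + (1 - α) * b ^ α := by
  have key : a ^ α * b ^ (1 - α) ≤ α * a + (1 - α) * b :=
    Real.geom_mean_le_arith_mean2_weighted hα0.le (by linarith) ha hb.le (by ring)
  have hbpow : (0:ℝ) < b ^ (α - 1) := Real.rpow_pos_of_pos hb _
  have h2 : a ^ α = a ^ α * b ^ (1-α) * b ^ (α-1) := by
    rw [mul_assoc, ← Real.rpow_add hb]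
    norm_num
  have h3 : b ^ (α-1) * b = b ^ α := by
    nth_rewrite 2 [← Real.rpow_one b]
    rw [← Real.rpow_add hb]
    norm_num
  calc a ^ α = a ^ α * b ^ (1-α) * b ^ (α-1) := h2
    _ ≤ (α * a + (1-α) * b) * b ^ (α-1) := mul_le_mul_of_nonneg_right key hbpow.le
    _ = α * (b ^ (α-1) * a) + (1-α) * (b ^ (α-1) * b) := by ring
    _ = α * (b ^ (α-1) * a) + (1-α) * b ^ α := by rw [h3]

private lemma psd_diag_re_nonneg {d : ℕ} {P : Matrix (Fin d) (Fin d) ℂ}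
    (hP : P.PosSemidef) (j : Fin d) : 0 ≤ (P j j).re := by
  have := hP.re_dotProduct_nonneg (Pi.single j 1)
  simpa [dotProduct, mulVec, Pi.single_apply, Finset.mul_sum, mul_ite, ite_mul] using this

private lemma row_normSq {d : ℕ} {N : Matrix (Fin d) (Fin d) ℂ}
    (hN : N ∈ Matrix.unitaryGroup (Fin d) ℂ) (j : Fin d) :
    ∑ k, Complex.normSq (N j k) = 1 := by
  have h1 := Matrix.mem_unitaryGroup_iff.mp hN
  have h2 : (N * Nᴴ) j j = (1 : Matrix (Fin d) (Fin d) ℂ) j j := by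
    rw [← Matrix.star_eq_conjTranspose, h1]
  simp only [Matrix.mul_apply, Matrix.conjTranspose_apply, Matrix.one_apply_eq] at h2
  have h3 : ∑ k, ((Complex.normSq (N j k) : ℝ) : ℂ) = 1 := by
    rw [← h2]
    exact Finset.sum_congr rfl fun k _ => by rw [← Complex.mul_conj]; rfl
  exact_mod_cast h3

private lemma col_normSq {d : ℕ} {N : Matrix (Fin d) (Fin d) ℂ}
    (hN : N ∈ Matrix.unitaryGroup (Fin d) ℂ) (k : Fin d) :
    ∑ j, Complex.normSq (N j k) = 1 := by
  have h1 := Matrix.mem_unitaryGroup_iff'.mp hN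
  have h2 : (Nᴴ * N) k k = (1 : Matrix (Fin d) (Fin d) ℂ) k k := by
    rw [← Matrix.star_eq_conjTranspose, h1]
  simp only [Matrix.mul_apply, Matrix.conjTranspose_apply, Matrix.one_apply_eq] at h2
  have h3 : ∑ j, ((Complex.normSq (N j k) : ℝ) : ℂ) = 1 := by
    rw [← h2]
    exact Finset.sum_congr rfl fun jj _ => by rw [mul_comm, ← Complex.mul_conj]; rfl
  exact_mod_cast h3

private lemma quad_entry {d : ℕ} (N : Matrix (Fin d) (Fin d) ℂ) (a : Fin d → ℝ) (j : Fin d) :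
    ((N * Matrix.diagonal ((RCLike.ofReal ∘ a : Fin d → ℂ)) * Nᴴ) j j).re
      = ∑ k, a k * Complex.normSq (N j k) := by
  have h1 : (N * Matrix.diagonal ((RCLike.ofReal ∘ a : Fin d → ℂ)) * Nᴴ) j j
      = ∑ k, ((a k * Complex.normSq (N j k) : ℝ) : ℂ) := by
    rw [Matrix.mul_apply]
    refine Finset.sum_congr rfl fun k _ => ?_
    rw [Matrix.mul_diagonal, Matrix.conjTranspose_apply]
    show N j k * ((a k : ℝ) : ℂ) * (starRingEnd ℂ) (N j k) = _
    calc N j k * ((a k : ℝ) : ℂ) * (starRingEnd ℂ) (N j k)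
        = ((a k : ℝ) : ℂ) * (N j k * (starRingEnd ℂ) (N j k)) := by ring
      _ = ((a k : ℝ) : ℂ) * ((Complex.normSq (N j k) : ℝ) : ℂ) := by rw [Complex.mul_conj]
      _ = ((a k * Complex.normSq (N j k) : ℝ) : ℂ) := by push_cast; ring
  rw [h1]
  push_cast
  simp

/-- Klein-type trace inequality: `Tr Y^α ≤ α ∑ b_j^{α-1} (VᴴYV)_{jj} + (1-α) ∑ b_j^α`. -/
private lemma klein_ineq {d : ℕ} {α : ℝ} (hα0 : 0 < α) (hα1 : α ≤ 1)
    {Y : Matrix (Fin d) (Fin d) ℂ} (hY : Y.PosSemidef)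
    {V : Matrix (Fin d) (Fin d) ℂ} (hV : V ∈ Matrix.unitaryGroup (Fin d) ℂ)
    {b : Fin d → ℝ} (hb : ∀ j, 0 < b j) :
    traceRpow Y hY.1 α ≤
      α * ∑ j, b j ^ (α-1) * ((Vᴴ * Y * V) j j).re + (1-α) * ∑ j, b j ^ α := by
  classical
  set a : Fin d → ℝ := hY.1.eigenvalues with ha
  have ha0 : ∀ k, 0 ≤ a k := fun k => hY.eigenvalues_nonneg k
  set W : Matrix (Fin d) (Fin d) ℂ := (hY.1.eigenvectorUnitary : Matrix (Fin d) (Fin d) ℂ)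
    with hW
  set N : Matrix (Fin d) (Fin d) ℂ := Vᴴ * W with hN
  have hNu : N ∈ Matrix.unitaryGroup (Fin d) ℂ := by
    have h1 : star V ∈ Matrix.unitaryGroup (Fin d) ℂ := Unitary.star_mem hV
    have := mul_mem h1 hY.1.eigenvectorUnitary.2
    simpa [Matrix.star_eq_conjTranspose] using this
  set p : Fin d → Fin d → ℝ := fun j k => Complex.normSq (N j k) with hp
  have hp0 : ∀ j k, 0 ≤ p j k := fun j k => Complex.normSq_nonneg _
  have hdec : Vᴴ * Y * V = N * Matrix.diagonal ((RCLike.ofReal ∘ a : Fin d → ℂ)) * Nᴴ := by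
    conv_lhs => rw [hY.1.spectral_theorem, Unitary.conjStarAlgAut_apply]
    simp only [hN, Matrix.star_eq_conjTranspose, Matrix.conjTranspose_mul,
      Matrix.conjTranspose_conjTranspose, Matrix.mul_assoc]
    rfl
  have key1 : ∀ j, ((Vᴴ * Y * V) j j).re = ∑ k, a k * p j k := by
    intro j; rw [hdec, quad_entry]
  have lhs1 : traceRpow Y hY.1 α = ∑ j, ∑ k, p j k * a k ^ α := by
    rw [Finset.sum_comm]
    refine Finset.sum_congr rfl fun k _ => ?_
    rw [← Finset.sum_mul, col_normSq hNu k, one_mul]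
  rw [lhs1]
  have step : ∀ j, ∑ k, p j k * a k ^ α
      ≤ α * (b j ^ (α-1) * ((Vᴴ * Y * V) j j).re) + (1-α) * b j ^ α := by
    intro j
    have e1 : α * (b j ^ (α-1) * (∑ k, a k * p j k))
        = ∑ k, p j k * (α * (b j ^ (α-1) * a k)) := by
      rw [Finset.mul_sum, Finset.mul_sum]
      exact Finset.sum_congr rfl fun k _ => by ring
    have e2 : (1-α) * b j ^ α = ∑ k, p j k * ((1-α) * b j ^ α) := by
      rw [← Finset.sum_mul, row_normSq hNu j, one_mul]
    have expand : α * (b j ^ (α-1) * ((Vᴴ * Y * V) j j).re) + (1-α) * b j ^ α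
        = ∑ k, p j k * (α * (b j ^ (α-1) * a k) + (1-α) * b j ^ α) := by
      conv_lhs => rw [key1 j, e1, e2]
      rw [← Finset.sum_add_distrib]
      exact Finset.sum_congr rfl fun k _ => by ring
    rw [expand]
    refine Finset.sum_le_sum fun k _ => ?_
    exact mul_le_mul_of_nonneg_left (tangent_line hα0 hα1 (ha0 k) (hb j)) (hp0 j k)
  calc ∑ j, ∑ k, p j k * a k ^ α
      ≤ ∑ j, (α * (b j ^ (α-1) * ((Vᴴ * Y * V) j j).re) + (1-α) * b j ^ α) :=
        Finset.sum_le_sum fun j _ => step j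
    _ = α * ∑ j, b j ^ (α-1) * ((Vᴴ * Y * V) j j).re + (1-α) * ∑ j, b j ^ α := by
        rw [Finset.sum_add_distrib, ← Finset.mul_sum, ← Finset.mul_sum]

theorem stmt13 {d r : ℕ} (α : ℝ) (hα0 : 0 < α) (hα1 : α ≤ 1)
    (K : Fin r → Matrix (Fin d) (Fin d) ℂ)
    (hK : (1 - ∑ i, (K i)ᴴ * K i).PosSemidef)
    (X : Matrix (Fin d) (Fin d) ℂ)
    (hX : (Xᴴ * X).IsHermitian)
    (h : ∀ i, (Xᴴ * (K i)ᴴ * K i * X).IsHermitian) :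
    ∑ i, (traceRpow _ (h i) α) ^ (1/α) ≤ (traceRpow _ hX α) ^ (1/α) := by
  classical
  have hαne : α ≠ 0 := hα0.ne'
  rcases Nat.eq_zero_or_pos d with hd | hd
  · subst hd
    have h1 : α⁻¹ ≠ 0 := by positivity
    simp [traceRpow, Real.zero_rpow h1, one_div]
  -- setup
  have hZ : (Xᴴ * X).PosSemidef := Matrix.posSemidef_conjTranspose_mul_self X
  have hμ0 : ∀ j, 0 ≤ hX.eigenvalues j := fun j => hZ.eigenvalues_nonneg j
  set V : Matrix (Fin d) (Fin d) ℂ := (hX.eigenvectorUnitary : Matrix (Fin d) (Fin d) ℂ)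
    with hVdef
  have hV : V ∈ Matrix.unitaryGroup (Fin d) ℂ := hX.eigenvectorUnitary.2
  have hYpsd : ∀ i, (Xᴴ * (K i)ᴴ * K i * X).PosSemidef := by
    intro i
    have e : Xᴴ * (K i)ᴴ * K i * X = (K i * X)ᴴ * (K i * X) := by
      rw [Matrix.conjTranspose_mul]
      simp only [Matrix.mul_assoc]
    rw [e]
    exact Matrix.posSemidef_conjTranspose_mul_self _
  have hdiff : (Xᴴ * X - ∑ i, Xᴴ * (K i)ᴴ * K i * X).PosSemidef := by
    have h1 := hK.conjTranspose_mul_mul_same X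
    have h2 : Xᴴ * (1 - ∑ i, (K i)ᴴ * K i) * X
        = Xᴴ * X - ∑ i, Xᴴ * (K i)ᴴ * K i * X := by
      rw [Matrix.mul_sub, Matrix.sub_mul, Matrix.mul_one]
      congr 1
      rw [Finset.mul_sum, Finset.sum_mul]
      exact Finset.sum_congr rfl fun i _ => by simp only [Matrix.mul_assoc]
    rwa [h2] at h1
  -- diagonal of conjugated Xᴴ X
  have hdiagZ : ∀ j, ((Vᴴ * (Xᴴ * X) * V) j j).re = hX.eigenvalues j := by
    have e : Vᴴ * (Xᴴ * X) * V
        = Matrix.diagonal ((RCLike.ofReal ∘ hX.eigenvalues : Fin d → ℂ)) := by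
      conv_lhs => rw [hX.spectral_theorem, Unitary.conjStarAlgAut_apply]
      rw [Matrix.star_eq_conjTranspose, ← hVdef]
      have h1 : Vᴴ * V = 1 := by
        have := Matrix.mem_unitaryGroup_iff'.mp hV
        rwa [Matrix.star_eq_conjTranspose] at this
      calc Vᴴ * (V * Matrix.diagonal ((RCLike.ofReal ∘ hX.eigenvalues : Fin d → ℂ)) * Vᴴ) * V
          = (Vᴴ * V) * Matrix.diagonal ((RCLike.ofReal ∘ hX.eigenvalues : Fin d → ℂ))
            * (Vᴴ * V) := by simp only [Matrix.mul_assoc]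
        _ = Matrix.diagonal ((RCLike.ofReal ∘ hX.eigenvalues : Fin d → ℂ)) := by
            rw [h1, Matrix.one_mul, Matrix.mul_one]
    intro j
    rw [e]
    simp [Matrix.diagonal_apply_eq]
  -- Claim A : for every ε > 0
  have claimA : ∀ ε : ℝ, 0 < ε →
      ∑ i, (traceRpow _ (h i) α) ^ (1/α) ≤ (∑ j, (hX.eigenvalues j + ε) ^ α) ^ (1/α) := by
    intro ε hε
    set b : Fin d → ℝ := fun j => hX.eigenvalues j + ε with hbdef
    have hb : ∀ j, 0 < b j := fun j => add_pos_of_nonneg_of_pos (hμ0 j) hε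
    set S : ℝ := ∑ j, b j ^ α with hSdef
    have hS0 : 0 < S := by
      have : Nonempty (Fin d) := Fin.pos_iff_nonempty.mp hd
      exact Finset.sum_pos (fun j _ => Real.rpow_pos_of_pos (hb j) α) Finset.univ_nonempty
    set s : Fin r → ℝ := fun i => ∑ j, b j ^ (α-1) * ((Vᴴ * (Xᴴ * (K i)ᴴ * K i * X) * V) j j).re
      with hsdef
    have hs0 : ∀ i, 0 ≤ s i := by
      intro i
      refine Finset.sum_nonneg fun j _ => mul_nonneg (Real.rpow_pos_of_pos (hb j) _).le ?_
      exact psd_diag_re_nonneg ((hYpsd i).conjTranspose_mul_mul_same V) j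
    have hbb : ∀ j, b j ^ (α-1) * b j = b j ^ α := by
      intro j
      nth_rewrite 2 [← Real.rpow_one (b j)]
      rw [← Real.rpow_add (hb j)]
      norm_num
    have hsum : ∑ i, s i ≤ S := by
      have e1 : ∑ i, s i
          = ∑ j, b j ^ (α-1) * ((Vᴴ * (∑ i, Xᴴ * (K i)ᴴ * K i * X) * V) j j).re := by
        rw [Finset.sum_comm]
        refine Finset.sum_congr rfl fun j _ => ?_
        rw [← Finset.mul_sum]
        congr 1
        have e : Vᴴ * (∑ i, Xᴴ * (K i)ᴴ * K i * X) * V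
            = ∑ i, Vᴴ * (Xᴴ * (K i)ᴴ * K i * X) * V := by
          rw [Finset.mul_sum, Finset.sum_mul]
        rw [e, Matrix.sum_apply, Complex.re_sum]
      have e2 : ∀ j, ((Vᴴ * (∑ i, Xᴴ * (K i)ᴴ * K i * X) * V) j j).re ≤ hX.eigenvalues j := by
        intro j
        have hdp := hdiff.conjTranspose_mul_mul_same V
        have hd0 := psd_diag_re_nonneg hdp j
        have hsplit : Vᴴ * (Xᴴ * X - ∑ i, Xᴴ * (K i)ᴴ * K i * X) * V
            = Vᴴ * (Xᴴ * X) * V - Vᴴ * (∑ i, Xᴴ * (K i)ᴴ * K i * X) * V := by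
          rw [Matrix.mul_sub, Matrix.sub_mul]
        rw [hsplit] at hd0
        simp only [Matrix.sub_apply, Complex.sub_re] at hd0
        have := hdiagZ j
        linarith
      rw [e1]
      calc ∑ j, b j ^ (α-1) * ((Vᴴ * (∑ i, Xᴴ * (K i)ᴴ * K i * X) * V) j j).re
          ≤ ∑ j, b j ^ (α-1) * b j := by
            refine Finset.sum_le_sum fun j _ => ?_
            refine mul_le_mul_of_nonneg_left ?_ (Real.rpow_pos_of_pos (hb j) _).le
            calc ((Vᴴ * (∑ i, Xᴴ * (K i)ᴴ * K i * X) * V) j j).re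
                ≤ hX.eigenvalues j := e2 j
              _ ≤ b j := by rw [hbdef]; simp; linarith
        _ = S := by rw [hSdef]; exact Finset.sum_congr rfl fun j _ => hbb j
    -- per-i Klein, scaled by t
    have key : ∀ i, ∀ t : ℝ, 0 < t →
        traceRpow _ (h i) α ≤ α * t ^ (α-1) * s i + (1-α) * t ^ α * S := by
      intro i t ht
      have hk := klein_ineq hα0 hα1 (hYpsd i) hV (b := fun j => t * b j)
        (fun j => mul_pos ht (hb j))
      have e3 : ∑ j, (t * b j) ^ (α-1) * ((Vᴴ * (Xᴴ * (K i)ᴴ * K i * X) * V) j j).re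
          = t ^ (α-1) * s i := by
        rw [hsdef, Finset.mul_sum]
        refine Finset.sum_congr rfl fun j _ => ?_
        rw [Real.mul_rpow ht.le (hb j).le]; ring
      have e4 : ∑ j, (t * b j) ^ α = t ^ α * S := by
        rw [hSdef, Finset.mul_sum]
        exact Finset.sum_congr rfl fun j _ => Real.mul_rpow ht.le (hb j).le
      rw [e3, e4] at hk
      calc traceRpow _ (h i) α = traceRpow _ (hYpsd i).1 α := rfl
        _ ≤ α * (t ^ (α-1) * s i) + (1-α) * (t ^ α * S) := hk
        _ = α * t ^ (α-1) * s i + (1-α) * t ^ α * S := by ring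
    have htr0 : ∀ i, 0 ≤ traceRpow _ (h i) α := by
      intro i
      refine Finset.sum_nonneg fun k _ => Real.rpow_nonneg ?_ _
      exact (hYpsd i).eigenvalues_nonneg k
    -- main bound with δ
    have main : ∀ δ : ℝ, 0 < δ →
        ∑ i, (traceRpow _ (h i) α) ^ (1/α)
          ≤ S ^ (1/α) + (r * S ^ ((1-α) * (1/α))) * δ := by
      intro δ hδ
      have per : ∀ i, (traceRpow _ (h i) α) ^ (1/α)
          ≤ (s i + δ) * S ^ ((1-α) * (1/α)) := by
        intro i
        have hu : 0 < s i + δ := add_pos_of_nonneg_of_pos (hs0 i) hδ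
        have ht : 0 < (s i + δ) / S := div_pos hu hS0
        have h1 := key i ((s i + δ) / S) ht
        have ha1 : ((s i + δ) / S) ^ (α-1) = (s i + δ) ^ (α-1) * S ^ (1-α) := by
          rw [Real.div_rpow hu.le hS0.le, div_eq_mul_inv, ← Real.rpow_neg hS0.le]
          congr 1
          ring
        have ha2 : ((s i + δ) / S) ^ α = (s i + δ) ^ α * S ^ (-α) := by
          rw [Real.div_rpow hu.le hS0.le, div_eq_mul_inv, ← Real.rpow_neg hS0.le]
        have hu1 : (s i + δ) ^ (α-1) * (s i + δ) = (s i + δ) ^ α := by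
          nth_rewrite 2 [← Real.rpow_one (s i + δ)]
          rw [← Real.rpow_add hu]
          norm_num
        have hS1 : S ^ (-α) * S = S ^ (1-α) := by
          nth_rewrite 2 [← Real.rpow_one S]
          rw [← Real.rpow_add hS0]
          ring_nf
        have h2 : α * ((s i + δ)/S) ^ (α-1) * s i + (1-α) * ((s i + δ)/S) ^ α * S
            ≤ (s i + δ) ^ α * S ^ (1-α) := by
          have hmono : α * ((s i + δ)/S) ^ (α-1) * s i
              ≤ α * ((s i + δ)/S) ^ (α-1) * (s i + δ) := by
            refine mul_le_mul_of_nonneg_left (by linarith) ?_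
            positivity
          have heq : α * ((s i + δ)/S) ^ (α-1) * (s i + δ) + (1-α) * ((s i + δ)/S) ^ α * S
              = (s i + δ) ^ α * S ^ (1-α) := by
            rw [ha1, ha2]
            calc α * ((s i + δ) ^ (α-1) * S ^ (1-α)) * (s i + δ)
                  + (1-α) * ((s i + δ) ^ α * S ^ (-α)) * S
                = α * ((s i + δ) ^ (α-1) * (s i + δ)) * S ^ (1-α)
                  + (1-α) * (s i + δ) ^ α * (S ^ (-α) * S) := by ring
              _ = α * (s i + δ) ^ α * S ^ (1-α) + (1-α) * (s i + δ) ^ α * S ^ (1-α) := by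
                  rw [hu1, hS1]
              _ = (s i + δ) ^ α * S ^ (1-α) := by ring
          linarith
        have h3 : (traceRpow _ (h i) α) ^ (1/α) ≤ ((s i + δ) ^ α * S ^ (1-α)) ^ (1/α) :=
          Real.rpow_le_rpow (htr0 i) (h1.trans h2) (by positivity)
        have h4 : ((s i + δ) ^ α * S ^ (1-α)) ^ (1/α)
            = (s i + δ) * S ^ ((1-α) * (1/α)) := by
          rw [Real.mul_rpow (Real.rpow_nonneg hu.le _) (Real.rpow_nonneg hS0.le _),
            ← Real.rpow_mul hu.le, ← Real.rpow_mul hS0.le,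
            mul_one_div_cancel hαne, Real.rpow_one]
        rw [h4] at h3
        exact h3
      calc ∑ i, (traceRpow _ (h i) α) ^ (1/α)
          ≤ ∑ i, (s i + δ) * S ^ ((1-α) * (1/α)) := Finset.sum_le_sum fun i _ => per i
        _ = (∑ i, s i) * S ^ ((1-α) * (1/α)) + (r * δ) * S ^ ((1-α) * (1/α)) := by
            rw [← Finset.sum_mul, Finset.sum_add_distrib, Finset.sum_const,
              Finset.card_univ, Fintype.card_fin, nsmul_eq_mul, add_mul]
        _ ≤ S * S ^ ((1-α) * (1/α)) + (r * δ) * S ^ ((1-α) * (1/α)) := by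
            refine add_le_add (mul_le_mul_of_nonneg_right hsum ?_) le_rfl
            exact Real.rpow_nonneg hS0.le _
        _ = S ^ (1/α) + (r * S ^ ((1-α) * (1/α))) * δ := by
            have : S * S ^ ((1-α) * (1/α)) = S ^ (1/α) := by
              nth_rewrite 1 [← Real.rpow_one S]
              rw [← Real.rpow_add hS0]
              congr 1
              field_simp
              ring
            rw [this]
            ring
    -- let δ → 0
    by_contra hcon
    push_neg at hcon
    set c := ∑ i, (traceRpow _ (h i) α) ^ (1/α) with hc
    have hgap : 0 < c - S ^ (1/α) := by
      have : (∑ j, (hX.eigenvalues j + ε) ^ α) ^ (1/α) = S ^ (1/α) := rfl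
      rw [this] at hcon
      linarith
    have hden : 0 < r * S ^ ((1-α) * (1/α)) + 1 := by positivity
    have := main ((c - S ^ (1/α)) / (r * S ^ ((1-α) * (1/α)) + 1)) (div_pos hgap hden)
    have hfrac : (r * S ^ ((1-α) * (1/α)))
        * ((c - S ^ (1/α)) / (r * S ^ ((1-α) * (1/α)) + 1)) < c - S ^ (1/α) := by
      have h5 : r * S ^ ((1-α) * (1/α)) < r * S ^ ((1-α) * (1/α)) + 1 := by linarith
      calc (r * S ^ ((1-α) * (1/α)))
            * ((c - S ^ (1/α)) / (r * S ^ ((1-α) * (1/α)) + 1))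
          < (r * S ^ ((1-α) * (1/α)) + 1)
            * ((c - S ^ (1/α)) / (r * S ^ ((1-α) * (1/α)) + 1)) :=
            mul_lt_mul_of_pos_right h5 (div_pos hgap hden)
        _ = c - S ^ (1/α) := by
            rw [mul_comm]
            exact div_mul_cancel₀ _ hden.ne'
    linarith
  -- let ε → 0⁺
  have hcont : Continuous (fun ε : ℝ => (∑ j, (hX.eigenvalues j + ε) ^ α) ^ (1/α)) := by
    have hin : Continuous (fun ε : ℝ => ∑ j : Fin d, (hX.eigenvalues j + ε) ^ α) := by
      refine continuous_finset_sum _ fun j _ => ?_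
      exact (Real.continuous_rpow_const hα0.le).comp (continuous_const.add continuous_id)
    exact (Real.continuous_rpow_const (by positivity)).comp hin
  have htend : Filter.Tendsto (fun ε : ℝ => (∑ j, (hX.eigenvalues j + ε) ^ α) ^ (1/α))
      (nhdsWithin 0 (Set.Ioi 0)) (nhds ((∑ j, (hX.eigenvalues j + 0) ^ α) ^ (1/α))) :=
    (hcont.tendsto 0).mono_left nhdsWithin_le_nhds
  have hfinal : ∑ i, (traceRpow _ (h i) α) ^ (1/α)
      ≤ (∑ j, (hX.eigenvalues j + 0) ^ α) ^ (1/α) := by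
    refine ge_of_tendsto htend ?_
    exact Filter.eventually_of_mem self_mem_nhdsWithin fun ε hε => claimA ε hε
  simpa [traceRpow] using hfinal
end
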